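/- Replacing the block 100 by 011 preserves value in base φ: for any position k, 1/φ^k = 1/φ^{k+1} + 1/φ^{k+2}. Consequently, for every h ≥ 0 the number of binary words of length h+1 having the same value as the word 10^h (a 1 followed by h zeros) equals 1 + ⌊h/2⌋. -/

import Mathlib

noncomputable def phi : ℝ := (1 + Real.sqrt 5) / 2

/-- Value of a binary word in base φ. -/
noncomputable def val {n : ℕ} (c : Fin n → Fin 2) : ℝ :=
  ∑ i : Fin n, (c i : ℕ) / phi ^ ((i : ℕ) + 1)

lemma phi_gt_one : 1 < phi := by
  have h : (1:ℝ) < Real.sqrt 5 := by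
    have : (1:ℝ) = Real.sqrt 1 := (Real.sqrt_one).symm
    rw [this]
    exact Real.sqrt_lt_sqrt (by norm_num) (by norm_num)
  unfold phi; linarith

lemma phi_pos : 0 < phi := lt_trans one_pos phi_gt_one

lemma phi_ne_zero : phi ≠ 0 := ne_of_gt phi_pos

lemma phi_sq : phi ^ 2 = phi + 1 := by
  have h : Real.sqrt 5 ^ 2 = 5 := Real.sq_sqrt (by norm_num)
  unfold phi
  nlinarith [h]

lemma fin2 (x : Fin 2) : x = 0 ∨ x = 1 := by omega

lemma subst_lemma (k : ℕ) : 1 / phi ^ k = 1 / phi ^ (k + 1) + 1 / phi ^ (k + 2) := by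
  have h := phi_sq
  have h0 := phi_ne_zero
  have hk : phi ^ k ≠ 0 := pow_ne_zero _ h0
  rw [pow_succ, pow_succ, pow_succ]
  field_simp
  nlinarith [h, pow_pos phi_pos k]

lemma val_succ (n : ℕ) (c : Fin (n + 1) → Fin 2) :
    val c = (c 0 : ℕ) / phi + (1 / phi) * val (fun i => c i.succ) := by
  unfold val
  rw [Fin.sum_univ_succ, Finset.mul_sum]
  congr 1
  · norm_num
  apply Finset.sum_congr rfl
  intro i _
  rw [Fin.val_succ, pow_succ, div_mul_eq_div_div, one_div, mul_comm, ← div_eq_mul_inv]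

lemma val_nonneg {n : ℕ} (c : Fin n → Fin 2) : 0 ≤ val c := by
  apply Finset.sum_nonneg
  intro i _
  exact div_nonneg (Nat.cast_nonneg _) (le_of_lt (pow_pos phi_pos _))

lemma val_lt : ∀ {n : ℕ} (c : Fin n → Fin 2), val c < phi := by
  intro n
  induction n with
  | zero => intro c; simp [val]; exact phi_pos
  | succ m ih =>
    intro c
    have key : val c = (((c 0 : ℕ) : ℝ) + val (fun i => c i.succ)) / phi := by
      rw [val_succ]
      ring
    have h1 : ((c 0 : ℕ) : ℝ) ≤ 1 := by
      have := (c 0).isLt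
      exact_mod_cast Nat.lt_succ_iff.mp this
    have h2 := ih (fun i => c i.succ)
    rw [key, div_lt_iff₀ phi_pos]
    nlinarith [phi_sq]

lemma val_eq_zero {n : ℕ} (c : Fin n → Fin 2) (h : val c = 0) : ∀ i, c i = 0 := by
  intro i
  have := (Finset.sum_eq_zero_iff_of_nonneg (by
    intro j _
    exact div_nonneg (Nat.cast_nonneg _) (le_of_lt (pow_pos phi_pos _)))).mp h i (Finset.mem_univ i)
  have hp : phi ^ ((i : ℕ) + 1) ≠ 0 := pow_ne_zero _ phi_ne_zero
  rw [div_eq_zero_iff] at this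
  rcases this with h' | h'
  · have : (c i : ℕ) = 0 := by exact_mod_cast h'
    omega
  · exact absurd h' hp

lemma val_target (n : ℕ) :
    val (fun i : Fin (n + 1) => if i = 0 then 1 else 0) = 1 / phi := by
  rw [val_succ]
  have h1 : (fun i : Fin n => if (i.succ : Fin (n+1)) = 0 then (1 : Fin 2) else 0)
      = fun _ => 0 := by
    funext i
    simp [Fin.succ_ne_zero]
  simp only [h1, if_pos rfl]
  have h2 : val (fun _ : Fin n => (0 : Fin 2)) = 0 := by simp [val]
  rw [h2]
  norm_num

noncomputable def gg (n : ℕ) (d : Fin n → Fin 2) : Fin (n + 2) → Fin 2 :=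
  Fin.cons 0 (Fin.cons 1 d)

lemma val_gg (n : ℕ) (d : Fin n → Fin 2) (hd : val d = 1 / phi) :
    val (gg n d) = 1 / phi := by
  rw [val_succ]
  have h1 : (fun i : Fin (n+1) => gg n d i.succ) = Fin.cons 1 d := by
    funext i
    simp [gg, Fin.cons_succ]
  rw [h1, val_succ]
  have h2 : (fun i : Fin n => (Fin.cons (1 : Fin 2) d : Fin (n+1) → Fin 2) i.succ) = d := by
    funext i
    simp [Fin.cons_succ]
  rw [h2, hd]
  simp only [gg, Fin.cons_zero, Fin.val_zero, Nat.cast_zero, zero_div, zero_add,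
    Fin.val_one, Nat.cast_one]
  have h0 := phi_ne_zero
  field_simp
  linear_combination (-1) * phi_sq

lemma classify (n : ℕ) (c : Fin (n + 2) → Fin 2) (hc : val c = 1 / phi) :
    c = (fun i => if i = 0 then 1 else 0) ∨
    (c 0 = 0 ∧ c (Fin.succ 0) = 1 ∧ val (fun i : Fin n => c i.succ.succ) = 1 / phi) := by
  have h0 := phi_ne_zero
  rw [val_succ] at hc
  rcases fin2 (c 0) with hz | ho
  · -- c 0 = 0 : then val of tail = 1
    right
    rw [hz] at hc
    simp only [Fin.val_zero, Nat.cast_zero, zero_div, zero_add] at hc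
    have ht : val (fun i : Fin (n+1) => c i.succ) = 1 := by
      field_simp at hc
      exact hc
    rw [val_succ] at ht
    rcases fin2 (c (Fin.succ 0)) with hz1 | ho1
    · exfalso
      rw [hz1] at ht
      simp only [Fin.val_zero, Nat.cast_zero, zero_div, zero_add] at ht
      have heq : val (fun i : Fin n => c i.succ.succ) = phi := by
        field_simp at ht
        linarith
      exact (ne_of_lt (val_lt (fun i : Fin n => c i.succ.succ))) heq
    · refine ⟨hz, ho1, ?_⟩
      rw [ho1] at ht
      simp only [Fin.val_one, Nat.cast_one] at ht
      have hphi : 1 / phi = phi - 1 := by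
        rw [div_eq_iff h0]
        nlinarith [phi_sq]
      rw [hphi] at ht ⊢
      have hpos : (0:ℝ) < phi - 1 := by linarith [phi_gt_one]
      have key : (phi - 1) * val (fun i : Fin n => c i.succ.succ) = (phi - 1) * (phi - 1) := by
        linear_combination ht - phi_sq
      exact mul_left_cancel₀ (ne_of_gt hpos) key
  · -- c 0 = 1 : tail is zero
    left
    rw [ho] at hc
    simp only [Fin.val_one, Nat.cast_one] at hc
    have ht0 : val (fun i : Fin (n+1) => c i.succ) = 0 := by
      have : (1/phi) * val (fun i : Fin (n+1) => c i.succ) = 0 := by linarith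
      rcases mul_eq_zero.mp this with h' | h'
      · exact absurd h' (one_div_ne_zero h0)
      · exact h'
    have hz := val_eq_zero _ ht0
    funext i
    induction i using Fin.cases with
    | zero => simpa using ho
    | succ j =>
      have hj : c j.succ = 0 := hz j
      rw [hj, if_neg (Fin.succ_ne_zero j)]

lemma T_step (n : ℕ) :
    {c : Fin (n + 2) → Fin 2 | val c = 1 / phi} =
    insert (fun i => if i = 0 then 1 else 0)
      (gg n '' {d | val d = 1 / phi}) := by
  ext c
  constructor
  · intro hc
    rcases classify n c hc with h | ⟨h0, h1, h2⟩
    · left; exact h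
    · right
      refine ⟨fun i => c i.succ.succ, h2, ?_⟩
      funext i
      induction i using Fin.cases with
      | zero => simp [gg, Fin.cons_zero, h0]
      | succ j =>
        simp only [gg, Fin.cons_succ]
        induction j using Fin.cases with
        | zero => simpa [Fin.cons_zero, Fin.succ_zero_eq_one] using h1.symm
        | succ k => simp [Fin.cons_succ]
  · rintro (h | ⟨d, hd, rfl⟩)
    · rw [Set.mem_setOf_eq, h]
      exact val_target _
    · exact val_gg n d hd

lemma gg_inj (n : ℕ) : Function.Injective (gg n) := by
  intro d e h
  funext i
  have := congrFun h i.succ.succ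
  simpa [gg, Fin.cons_succ] using this

lemma ncard_T : ∀ n : ℕ, {c : Fin n → Fin 2 | val c = 1 / phi}.ncard = (n + 1) / 2 := by
  intro n
  induction n using Nat.strong_induction_on with
  | _ n ih =>
    match n with
    | 0 =>
      have he : {c : Fin 0 → Fin 2 | val c = 1 / phi} = ∅ := by
        ext c
        simp only [Set.mem_setOf_eq, Set.mem_empty_iff_false, iff_false]
        intro h
        have : val c = 0 := by simp [val]
        rw [this] at h
        have := phi_pos
        have : (0:ℝ) < 1 / phi := by positivity
        linarith [h ▸ this]
      rw [he, Set.ncard_empty]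
    | 1 =>
      have he : {c : Fin 1 → Fin 2 | val c = 1 / phi} = {fun _ => 1} := by
        ext c
        simp only [Set.mem_setOf_eq, Set.mem_singleton_iff]
        constructor
        · intro h
          rw [val_succ] at h
          have h2 : val (fun i : Fin 0 => c i.succ) = 0 := by simp [val]
          rw [h2, mul_zero, add_zero] at h
          rcases fin2 (c 0) with hz | ho
          · exfalso
            rw [hz] at h
            simp at h
            have := phi_pos
            have : (0:ℝ) < 1 / phi := by positivity
            linarith [h ▸ this]
          · funext i
            have : i = 0 := Subsingleton.elim _ _
            rw [this, ho]
        · intro h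
          rw [h, val_succ]
          have h2 : val (fun _ : Fin 0 => (1:Fin 2)) = 0 := by simp [val]
          rw [h2]
          norm_num
      rw [he, Set.ncard_singleton]
    | (m + 2) =>
      rw [T_step m]
      have hnot : (fun i : Fin (m+2) => if i = 0 then (1:Fin 2) else 0) ∉
          gg m '' {d | val d = 1 / phi} := by
        rintro ⟨d, _, heq⟩
        have := congrFun heq 0
        simp [gg, Fin.cons_zero] at this
      rw [Set.ncard_insert_of_notMem hnot (Set.toFinite _),
        Set.ncard_image_of_injective _ (gg_inj m), ih m (by omega)]
      omega

theorem substitution_and_class_of_one_zeros :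
    (∀ k : ℕ, 1 / phi ^ k = 1 / phi ^ (k + 1) + 1 / phi ^ (k + 2)) ∧
    ∀ h : ℕ,
      Nat.card {c : Fin (h + 1) → Fin 2 //
        val c = val (fun i : Fin (h + 1) => if i = 0 then 1 else 0)} = 1 + h / 2 := by
  constructor
  · exact subst_lemma
  · intro h
    simp only [val_target]
    have e : Nat.card {c : Fin (h + 1) → Fin 2 // val c = 1 / phi} =
        {c : Fin (h + 1) → Fin 2 | val c = 1 / phi}.ncard :=
      Nat.card_coe_set_eq _
    rw [e, ncard_T (h + 1)]
    omega
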